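/- Let r ≥ 1, N_r = binom(⌈r/2⌉+1, 2) + binom(⌊r/2⌋+1, 2), and let 0 ≤ t ≤ ⌈r/2⌉. Suppose nonnegative integers a_1,...,a_r, b_1,...,b_r satisfy ∑a_i + ∑b_j = N_r − t and a_i + b_j ≥ r + 1 − i − j for all i ∈ [r], j ∈ [r+1−i]. Then the number of pairs (i,j) with i ∈ [r], j ∈ [r+1−i] and a_i + b_j = r + 1 − i − j (exactly weakly fixed pairs, i.e., entries left equal to exactly 1) is at least t·(⌊r/2⌋ + 1). -/

import Mathlib

open Finset

/-- `F` is a configuration in the simple matrix `A` (columns of `A` form a finset):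
there is an injection of rows such that the multiset `F` of columns is a sub-multiset
of the restricted columns of `A`. -/
def ConfigIn {s k m : ℕ} (F : Multiset (Fin k → Fin s)) (A : Finset (Fin m → Fin s)) : Prop :=
  ∃ ρ : Fin k ↪ Fin m, F ≤ A.1.map (fun col => col ∘ ρ)

/-- The forbidden number: the maximum number of columns of an `m`-rowed simple
`s`-matrix avoiding `F` as a configuration. -/
noncomputable def forb (m s : ℕ) {k : ℕ} (F : Multiset (Fin k → Fin s)) : ℕ :=
  sSup {n : ℕ | ∃ A : Finset (Fin m → Fin s), ¬ ConfigIn F A ∧ A.card = n}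

/-- The 2-rowed configuration with `a` columns (0,0), `b` columns (1,0),
`c` columns (0,1) and `d` columns (1,1), viewed as a 3-matrix. -/
def Fabcd (a b c d : ℕ) : Multiset (Fin 2 → Fin 3) :=
  Multiset.replicate a ![0, 0] + Multiset.replicate b ![1, 0] +
  Multiset.replicate c ![0, 1] + Multiset.replicate d ![1, 1]

/-- `p` copies of `K₂`. -/
def pK2 (p : ℕ) : Multiset (Fin 2 → Fin 3) := Fabcd p p p p

/-- `p` copies of `I₂`. -/
def pI2 (p : ℕ) : Multiset (Fin 2 → Fin 3) := Fabcd 0 p p 0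



private lemma two_sum_Icc_id (n : ℕ) : 2 * ∑ i ∈ Icc 1 n, i = n * (n + 1) := by
  induction n with
  | zero => simp
  | succ n ih =>
    rw [Finset.sum_Icc_succ_top (by omega)]
    ring_nf
    ring_nf at ih
    nlinarith [ih]

private lemma base1 (x : ℕ) : 2 * ∑ i ∈ Icc 1 (x-1), (x - i) + x = x * x := by
  have h0 : ∀ i ∈ Icc 1 (x-1), (x - i) + i = x := fun i hi => by
    have := Finset.mem_Icc.mp hi; omega
  have h1 : ∑ i ∈ Icc 1 (x-1), ((x-i) + i) = (x-1) * x := by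
    rw [Finset.sum_congr rfl h0, Finset.sum_const, Nat.card_Icc, smul_eq_mul]
    congr 1 <;> omega
  rw [Finset.sum_add_distrib] at h1
  have h2 := two_sum_Icc_id (x-1)
  rcases Nat.eq_zero_or_pos x with rfl | hx1
  · simp
  · have h3 : (x-1)*(x-1+1) = (x-1)*x := by congr 1; omega
    have h4 : (x-1)*x + x = x*x := by
      cases x with
      | zero => simp
      | succ n => simp only [Nat.succ_sub_one]; ring
    linarith

private lemma base2 (x : ℕ) : 2 * ∑ i ∈ Icc 1 x, (x - i) + x = x * x := by
  have h0 : ∀ i ∈ Icc 1 x, (x - i) + i = x := fun i hi => by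
    have := Finset.mem_Icc.mp hi; omega
  have h1 : ∑ i ∈ Icc 1 x, ((x-i) + i) = x * x := by
    rw [Finset.sum_congr rfl h0, Finset.sum_const, Nat.card_Icc, smul_eq_mul]
    congr 1 <;> omega
  rw [Finset.sum_add_distrib] at h1
  have h2 := two_sum_Icc_id x
  nlinarith [h1, h2]

private lemma sum_lb (r x : ℕ) (a : ℕ → ℕ) (hx : ∀ i ∈ Icc 1 r, x ≤ a i + i)
    (hxr : x ≤ r + 1) : x * x ≤ 2 * ∑ i ∈ Icc 1 r, a i + x := by
  have hsub : Icc 1 (x-1) ⊆ Icc 1 r := Icc_subset_Icc_right (by omega)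
  have hpt : ∀ i ∈ Icc 1 (x-1), x - i ≤ a i := by
    intro i hi
    have h1 := Finset.mem_Icc.mp hi
    have h2 := hx i (hsub hi)
    omega
  have hle : ∑ i ∈ Icc 1 (x-1), (x - i) ≤ ∑ i ∈ Icc 1 r, a i :=
    le_trans (Finset.sum_le_sum hpt) (Finset.sum_le_sum_of_subset hsub)
  have hb := base1 x
  omega

private lemma sum_lb' (r x : ℕ) (a : ℕ → ℕ) (hx : ∀ i ∈ Icc 1 r, x ≤ a i + i)
    (hxr : x ≤ r) :
    x * x + x ≤ 2 * ∑ i ∈ Icc 1 r, a i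
      + 2 * ((Icc 1 r).filter (fun i => a i + i = x)).card := by
  classical
  set c := ((Icc 1 x).filter (fun i => a i + i = x)).card with hc
  have hcp : c ≤ ((Icc 1 r).filter (fun i => a i + i = x)).card :=
    card_le_card (filter_subset_filter _ (Icc_subset_Icc_right (by omega)))
  have hcx : c ≤ x := le_trans (card_le_card (filter_subset _ _)) (by simp [Nat.card_Icc])
  have hpt : ∀ i ∈ Icc 1 x, (x - i) + (if a i + i = x then 0 else 1) ≤ a i := by
    intro i hi
    have h1 := mem_Icc.mp hi
    have h2 := hx i (mem_Icc.mpr ⟨h1.1, le_trans h1.2 hxr⟩)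
    split <;> omega
  have hs1 : ∑ i ∈ Icc 1 x, ((x-i) + (if a i + i = x then 0 else 1))
      ≤ ∑ i ∈ Icc 1 x, a i := Finset.sum_le_sum hpt
  have hs2 : ∑ i ∈ Icc 1 x, a i ≤ ∑ i ∈ Icc 1 r, a i :=
    Finset.sum_le_sum_of_subset (Icc_subset_Icc_right (by omega))
  rw [Finset.sum_add_distrib] at hs1
  have hind : ∑ i ∈ Icc 1 x, (if a i + i = x then 0 else 1)
      = ((Icc 1 x).filter (fun i => ¬(a i + i = x))).card := by
    rw [Finset.card_filter]
    exact Finset.sum_congr rfl (fun i _ => by by_cases hh : a i + i = x <;> simp [hh])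
  have hsplit := Finset.card_filter_add_card_filter_not
    (s := Icc 1 x) (p := fun i => a i + i = x)
  beta_reduce at hsplit
  have hcard : (Icc 1 x).card = x := by simp [Nat.card_Icc]
  have hb := base2 x
  omega

private lemma two_mul_choose (n : ℕ) : 2 * (n+1).choose 2 = (n+1) * n := by
  rw [Nat.choose_two_right]
  simp only [Nat.add_sub_cancel]
  have h2 : 2 ∣ (n+1) * n := by
    rw [mul_comm]
    exact (Nat.even_mul_succ_self n).two_dvd
  exact Nat.mul_div_cancel' h2

private lemma key (H D p q t k e : ℤ) (hD0 : 0 ≤ D) (hk0 : 0 ≤ k)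
    (he0 : 0 ≤ e) (hHe : H + e = D + 1) (ht0 : 0 ≤ t) (htH : t ≤ H)
    (hp1 : 1 ≤ p) (hpx : p ≤ H - k) (hq1 : 1 ≤ q) (hqy : q ≤ D + 1 + k)
    (hpq : D + 1 + t + k*k + k*e ≤ p + q) :
    t * (D + 1) ≤ p * q := by
  set S : ℤ := D + 1 + t + k*k + k*e with hS
  set A : ℤ := t + k*k + k*e - k with hA
  have hKnn : 0 ≤ k*k + k*e - k := by
    rcases eq_or_lt_of_le hk0 with hh | hh
    · simp [← hh]
    · nlinarith
  have hpA : A ≤ p := by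
    have : A = S - (D + 1 + k) := by rw [hS, hA]; ring
    linarith
  have hpy : p ≤ D + 1 + k := by linarith
  have h1 : p * (S - p) ≤ p * q := by
    have hq2 : S - p ≤ q := by linarith
    nlinarith
  have h2 : A * (S - A) ≤ p * (S - p) := by
    nlinarith [mul_nonneg (by linarith : (0:ℤ) ≤ p - A)
      (by linarith : (0:ℤ) ≤ S - p - A)]
  have h3 : t * (D + 1) ≤ A * (S - A) := by
    have hSA : S - A = D + 1 + k := by rw [hS, hA]; ring
    rw [hSA]
    nlinarith [mul_nonneg ht0 hk0,
      mul_nonneg hKnn (by linarith : (0:ℤ) ≤ D + 1 + k)]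
  linarith

private lemma keyA (H D u v : ℤ) (hDH : D ≤ H) (hHD : H ≤ D + 1)
    (hu1 : 1 ≤ u) (hv1 : 1 ≤ v) (hsum : u + v = H + D + 2) :
    (H+1)*H + (D+1)*D ≤ u*(u-1) + v*(v-1) := by
  have hsgn : 0 ≤ (u - (H+1)) * (u - (D+1)) := by
    rcases le_or_gt u (D+1) with hh | hh
    · nlinarith
    · nlinarith
  nlinarith [hsgn]

private lemma keyA' (H D u v Sa Sb t : ℤ) (hDH : D ≤ H) (hHD : H ≤ D + 1)
    (hu1 : 1 ≤ u) (hur : u ≤ H + D + 1) (huv : H + D + 2 ≤ u + v) (hv1 : 1 ≤ v)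
    (hsa : u * u ≤ 2 * Sa + u) (hsb : v * v ≤ 2 * Sb + v)
    (hT : 2 * Sa + 2 * Sb + 2 * t = (H + 1) * H + (D + 1) * D) (ht : 1 ≤ t) : False := by
  have hw1 : (1:ℤ) ≤ H + D + 2 - u := by linarith
  have hwv : H + D + 2 - u ≤ v := by linarith
  have hkA := keyA H D u (H + D + 2 - u) hDH hHD hu1 hw1 (by ring)
  have hmono : (H + D + 2 - u) * (H + D + 2 - u - 1) ≤ v * (v - 1) := by nlinarith
  nlinarith [hkA, hmono, hsa, hsb]

private lemma keyB' (H D x y p q t Sa Sb : ℤ) (hDH : D ≤ H) (hHD : H ≤ D + 1)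
    (hD0 : 0 ≤ D) (hx1 : 1 ≤ x) (hxy : x ≤ y) (hsum : x + y = H + D + 1)
    (ht0 : 0 ≤ t) (htH : t ≤ H)
    (hp1 : 1 ≤ p) (hpx : p ≤ x) (hq1 : 1 ≤ q) (hqy : q ≤ y)
    (hsa : x * x + x ≤ 2 * Sa + 2 * p) (hsb : y * y + y ≤ 2 * Sb + 2 * q)
    (hT : 2 * Sa + 2 * Sb + 2 * t = (H + 1) * H + (D + 1) * D) :
    t * (D + 1) ≤ p * q := by
  have hy : y = H + D + 1 - x := by linarith
  subst hy
  have hxH : x ≤ H := by omega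
  exact key H D p q t (H - x) (D + 1 - H) hD0 (by omega) (by omega) (by ring)
    ht0 htH hp1 (by omega) hq1 (by omega) (by nlinarith [hsa, hsb, hT])


theorem weakly_fixed_count (r t : ℕ) (hr : 1 ≤ r) (ht : t ≤ (r + 1) / 2)
    (a b : ℕ → ℕ)
    (hN : ∑ i ∈ Finset.Icc 1 r, a i + ∑ j ∈ Finset.Icc 1 r, b j
      = Nat.choose ((r + 1) / 2 + 1) 2 + Nat.choose (r / 2 + 1) 2 - t)
    (h : ∀ i ∈ Finset.Icc 1 r, ∀ j ∈ Finset.Icc 1 (r + 1 - i),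
      r + 1 ≤ a i + b j + i + j) :
    t * (r / 2 + 1)
      ≤ ((((Finset.Icc 1 r) ×ˢ (Finset.Icc 1 r)).filter (fun ij =>
          ij.1 + ij.2 ≤ r + 1 ∧ a ij.1 + b ij.2 + ij.1 + ij.2 = r + 1)).card) := by
  classical
  rcases Nat.eq_zero_or_pos t with rfl | ht1
  · simp
  have hne : (Icc 1 r).Nonempty := ⟨1, mem_Icc.mpr ⟨le_refl 1, hr⟩⟩
  set x := (Icc 1 r).inf' hne (fun i => a i + i) with hxdef
  set y := (Icc 1 r).inf' hne (fun j => b j + j) with hydef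
  obtain ⟨i0, hi0, hxi0⟩ := Finset.exists_mem_eq_inf' hne (fun i => a i + i)
  obtain ⟨j0, hj0, hyj0⟩ := Finset.exists_mem_eq_inf' hne (fun j => b j + j)
  rw [← hxdef] at hxi0
  rw [← hydef] at hyj0
  have hxa : ∀ i ∈ Icc 1 r, x ≤ a i + i := fun i hi => Finset.inf'_le _ hi
  have hyb : ∀ j ∈ Icc 1 r, y ≤ b j + j := fun j hj => Finset.inf'_le _ hj
  clear_value x y
  have hi0m := mem_Icc.mp hi0
  have hj0m := mem_Icc.mp hj0
  have hx1 : 1 ≤ x := by omega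
  have hy1 : 1 ≤ y := by omega
  have hxy : r + 1 ≤ x + y := by
    by_contra hc
    push_neg at hc
    have hj0' : j0 ∈ Icc 1 (r + 1 - i0) := mem_Icc.mpr ⟨hj0m.1, by omega⟩
    have hcon := h i0 hi0 j0 hj0'
    omega
  -- N and parity setup
  set H := (r + 1) / 2 with hHdef
  set D := r / 2 with hDdef
  have hHD1 : D ≤ H := by omega
  have hHD2 : H ≤ D + 1 := by omega
  have hHD3 : H + D = r := by omega
  have hH1 : 1 ≤ H := by omega
  set Nn := Nat.choose (H + 1) 2 + Nat.choose (D + 1) 2 with hNdef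
  have h2N : 2 * Nn = (H + 1) * H + (D + 1) * D := by
    rw [hNdef, mul_add, two_mul_choose, two_mul_choose]
  have hHN : 2 * H ≤ (H + 1) * H := by nlinarith
  have htN : t ≤ Nn := by omega
  have hT : (∑ i ∈ Icc 1 r, a i) + (∑ j ∈ Icc 1 r, b j) + t = Nn := by omega
  rcases eq_or_lt_of_le hxy with heq | hgt
  · -- x + y = r + 1
    set P := (Icc 1 r).filter (fun i => a i + i = x) with hPdef
    set Q := (Icc 1 r).filter (fun j => b j + j = y) with hQdef
    have hp1 : 1 ≤ P.card :=
      Finset.card_pos.mpr ⟨i0, Finset.mem_filter.mpr ⟨hi0, hxi0.symm⟩⟩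
    have hq1 : 1 ≤ Q.card :=
      Finset.card_pos.mpr ⟨j0, Finset.mem_filter.mpr ⟨hj0, hyj0.symm⟩⟩
    have hPsub : P ⊆ Icc 1 x := by
      intro i hi
      have h1 := Finset.mem_filter.mp hi
      have h2 := mem_Icc.mp h1.1
      have h3 := h1.2
      exact mem_Icc.mpr ⟨h2.1, by omega⟩
    have hQsub : Q ⊆ Icc 1 y := by
      intro j hj
      have h1 := Finset.mem_filter.mp hj
      have h2 := mem_Icc.mp h1.1
      have h3 := h1.2
      exact mem_Icc.mpr ⟨h2.1, by omega⟩
    have hpx : P.card ≤ x :=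
      le_trans (Finset.card_le_card hPsub) (by simp [Nat.card_Icc])
    have hqy : Q.card ≤ y :=
      le_trans (Finset.card_le_card hQsub) (by simp [Nat.card_Icc])
    have hsub : P ×ˢ Q ⊆ ((Icc 1 r) ×ˢ (Icc 1 r)).filter (fun ij =>
        ij.1 + ij.2 ≤ r + 1 ∧ a ij.1 + b ij.2 + ij.1 + ij.2 = r + 1) := by
      intro ij hij
      rw [Finset.mem_product] at hij
      have h1 := Finset.mem_filter.mp hij.1
      have h2 := Finset.mem_filter.mp hij.2
      have h3 := mem_Icc.mp h1.1
      have h4 := mem_Icc.mp h2.1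
      have h5 := h1.2
      have h6 := h2.2
      refine Finset.mem_filter.mpr ⟨Finset.mem_product.mpr ⟨h1.1, h2.1⟩, ?_, ?_⟩
      · omega
      · omega
    have hcard : P.card * Q.card ≤ (((Icc 1 r) ×ˢ (Icc 1 r)).filter (fun ij =>
        ij.1 + ij.2 ≤ r + 1 ∧ a ij.1 + b ij.2 + ij.1 + ij.2 = r + 1)).card := by
      rw [← Finset.card_product]
      exact Finset.card_le_card hsub
    have hxr : x ≤ r := by omega
    have hyr : y ≤ r := by omega
    have hsa := sum_lb' r x a hxa hxr
    have hsb := sum_lb' r y b hyb hyr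
    refine le_trans ?_ hcard
    have hT2 : 2 * ((∑ i ∈ Icc 1 r, a i : ℕ) : ℤ) + 2 * ((∑ j ∈ Icc 1 r, b j : ℕ) : ℤ)
        + 2 * (t : ℤ) = ((H:ℤ) + 1) * H + ((D:ℤ) + 1) * D := by
      have h2N' : 2 * (Nn : ℤ) = ((H : ℤ) + 1) * H + ((D : ℤ) + 1) * D := by exact_mod_cast h2N
      have hT' : ((∑ i ∈ Icc 1 r, a i : ℕ) : ℤ) + ((∑ j ∈ Icc 1 r, b j : ℕ) : ℤ) + t = Nn := by
        exact_mod_cast hT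
      linarith
    have hfin : (t : ℤ) * ((D : ℤ) + 1) ≤ (P.card : ℤ) * (Q.card : ℤ) := by
      rcases le_total x y with hle | hle
      · exact keyB' H D x y P.card Q.card t _ _ (by exact_mod_cast hHD1)
          (by exact_mod_cast hHD2) (by positivity) (by exact_mod_cast hx1)
          (by exact_mod_cast hle) (by push_cast; omega) (by positivity)
          (by exact_mod_cast ht) (by exact_mod_cast hp1) (by exact_mod_cast hpx)
          (by exact_mod_cast hq1) (by exact_mod_cast hqy)
          (by exact_mod_cast hsa) (by exact_mod_cast hsb) hT2
      · have := keyB' H D y x Q.card P.card t ((∑ j ∈ Icc 1 r, b j : ℕ) : ℤ)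
          ((∑ i ∈ Icc 1 r, a i : ℕ) : ℤ) (by exact_mod_cast hHD1)
          (by exact_mod_cast hHD2) (by positivity) (by exact_mod_cast hy1)
          (by exact_mod_cast hle) (by push_cast; omega) (by positivity)
          (by exact_mod_cast ht) (by exact_mod_cast hq1) (by exact_mod_cast hqy)
          (by exact_mod_cast hp1) (by exact_mod_cast hpx)
          (by exact_mod_cast hsb) (by exact_mod_cast hsa) (by linarith [hT2])
        linarith [this]
    exact_mod_cast hfin
  · -- x + y ≥ r + 2 : contradiction
    exfalso
    set u := min x (r + 1) with hudef
    set v := min y (r + 1) with hvdef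
    have hux := min_choice x (r + 1)
    have hvy := min_choice y (r + 1)
    have hux1 : u ≤ x := min_le_left _ _
    have hvy1 : v ≤ y := min_le_left _ _
    have hur0 : u ≤ r + 1 := min_le_right _ _
    have hvr0 : v ≤ r + 1 := min_le_right _ _
    rw [← hudef] at hux
    rw [← hvdef] at hvy
    clear_value u v
    have hu : ∀ i ∈ Icc 1 r, u ≤ a i + i := fun i hi =>
      le_trans hux1 (hxa i hi)
    have hv : ∀ j ∈ Icc 1 r, v ≤ b j + j := fun j hj =>
      le_trans hvy1 (hyb j hj)
    have hsa := sum_lb r u a hu hur0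
    have hsb := sum_lb r v b hv hvr0
    have hu1 : 1 ≤ u := by omega
    have hv1 : 1 ≤ v := by omega
    have hur : u ≤ r + 1 := hur0
    have huv : r + 2 ≤ u + v := by omega
    -- go to ℤ
    have hT2 : 2 * ((∑ i ∈ Icc 1 r, a i : ℕ) : ℤ) + 2 * ((∑ j ∈ Icc 1 r, b j : ℕ) : ℤ)
        + 2 * (t : ℤ) = ((H:ℤ) + 1) * H + ((D:ℤ) + 1) * D := by
      have h2N' : 2 * (Nn : ℤ) = ((H : ℤ) + 1) * H + ((D : ℤ) + 1) * D := by exact_mod_cast h2N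
      have hT' : ((∑ i ∈ Icc 1 r, a i : ℕ) : ℤ) + ((∑ j ∈ Icc 1 r, b j : ℕ) : ℤ) + t = Nn := by
        exact_mod_cast hT
      linarith
    exact keyA' H D u v _ _ t (by exact_mod_cast hHD1) (by exact_mod_cast hHD2)
      (by exact_mod_cast hu1) (by push_cast; omega) (by push_cast; omega)
      (by exact_mod_cast hv1) (by exact_mod_cast hsa) (by exact_mod_cast hsb)
      hT2 (by exact_mod_cast ht1)
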